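/- Suppose g : ℝ^d → ℝ is L_g-smooth (gradient L_g-Lipschitz), ℓ : ℝ^d → ℝ^m is differentiable with ‖∇ℓ(x)‖ ≤ G_ℓ (Jacobian spectral norm bound) and ∇ℓ is L_ℓ-Lipschitz, and all y in a set Y satisfy ‖y‖ ≤ D_y. Define f₀(x, y) = g(x) - ⟨y, ℓ(x)⟩. Then for all x, x' and y, y' ∈ Y: ‖∇_x f₀(x,y) - ∇_x f₀(x',y')‖² + ‖∇_y f₀(x,y) - ∇_y f₀(x',y')‖² ≤ L²(‖x - x'‖² + ‖y - y'‖²), where L = sqrt(max(2L_g² + 4L_ℓ²D_y² + G_ℓ², 4G_ℓ²)). -/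
import Mathlib
set_option maxHeartbeats 1000000


open RealInnerProductSpace

theorem stmt_6 (d m : ℕ) (Lg Gℓ Lℓ Dy : ℝ)
    (g : EuclideanSpace ℝ (Fin d) → ℝ) (g' : EuclideanSpace ℝ (Fin d) → EuclideanSpace ℝ (Fin d))
    (ℓ : EuclideanSpace ℝ (Fin d) → EuclideanSpace ℝ (Fin m))
    (Dℓ : EuclideanSpace ℝ (Fin d) → (EuclideanSpace ℝ (Fin d) →L[ℝ] EuclideanSpace ℝ (Fin m)))
    (Y : Set (EuclideanSpace ℝ (Fin m)))
    (hg : ∀ x, HasGradientAt g (g' x) x)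
    (hgL : ∀ x x', ‖g' x - g' x'‖ ≤ Lg * ‖x - x'‖)
    (hℓ : ∀ x, HasFDerivAt ℓ (Dℓ x) x)
    (hGℓ : ∀ x, ‖Dℓ x‖ ≤ Gℓ)
    (hLℓ : ∀ x x', ‖Dℓ x - Dℓ x'‖ ≤ Lℓ * ‖x - x'‖)
    (hY : ∀ y ∈ Y, ‖y‖ ≤ Dy) :
    ∀ x x' : EuclideanSpace ℝ (Fin d), ∀ y ∈ Y, ∀ y' ∈ Y,
      ‖(g' x - ContinuousLinearMap.adjoint (Dℓ x) y) -
        (g' x' - ContinuousLinearMap.adjoint (Dℓ x') y')‖ ^ 2 +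
      ‖(-ℓ x) - (-ℓ x')‖ ^ 2 ≤
      (Real.sqrt (max (2 * Lg ^ 2 + 4 * Lℓ ^ 2 * Dy ^ 2 + Gℓ ^ 2) (4 * Gℓ ^ 2))) ^ 2 *
        (‖x - x'‖ ^ 2 + ‖y - y'‖ ^ 2) := by
  have hGℓ0 : 0 ≤ Gℓ := le_trans (norm_nonneg _) (hGℓ 0)
  intro x x' y hy y' hy'
  have hDy0 : 0 ≤ Dy := le_trans (norm_nonneg _) (hY y hy)
  have hA0 : (0:ℝ) ≤ ‖x - x'‖ := norm_nonneg _
  have hB0 : (0:ℝ) ≤ ‖y - y'‖ := norm_nonneg _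
  -- bound on g' difference
  have h1 : ‖g' x - g' x'‖ ≤ Lg * ‖x - x'‖ := hgL x x'
  -- bound on adjoint pieces
  have h2 : ‖ContinuousLinearMap.adjoint (Dℓ x) y - ContinuousLinearMap.adjoint (Dℓ x') y‖
      ≤ Lℓ * ‖x - x'‖ * Dy := by
    have he : ContinuousLinearMap.adjoint (Dℓ x) y - ContinuousLinearMap.adjoint (Dℓ x') y
        = (ContinuousLinearMap.adjoint (Dℓ x - Dℓ x')) y := by
      rw [map_sub]; rfl
    rw [he]
    calc ‖(ContinuousLinearMap.adjoint (Dℓ x - Dℓ x')) y‖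
        ≤ ‖ContinuousLinearMap.adjoint (Dℓ x - Dℓ x')‖ * ‖y‖ :=
          ContinuousLinearMap.le_opNorm _ _
      _ = ‖Dℓ x - Dℓ x'‖ * ‖y‖ := by
          rw [ContinuousLinearMap.adjoint.norm_map]
      _ ≤ (Lℓ * ‖x - x'‖) * Dy :=
          mul_le_mul (hLℓ x x') (hY y hy) (norm_nonneg _)
            (le_trans (norm_nonneg _) (hLℓ x x'))
  have h3 : ‖ContinuousLinearMap.adjoint (Dℓ x') y - ContinuousLinearMap.adjoint (Dℓ x') y'‖
      ≤ Gℓ * ‖y - y'‖ := by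
    rw [← map_sub]
    calc ‖(ContinuousLinearMap.adjoint (Dℓ x')) (y - y')‖
        ≤ ‖ContinuousLinearMap.adjoint (Dℓ x')‖ * ‖y - y'‖ :=
          ContinuousLinearMap.le_opNorm _ _
      _ ≤ Gℓ * ‖y - y'‖ := by
          rw [ContinuousLinearMap.adjoint.norm_map]
          exact mul_le_mul_of_nonneg_right (hGℓ x') hB0
  -- Lipschitz bound on ℓ
  have h4 : ‖ℓ x - ℓ x'‖ ≤ Gℓ * ‖x - x'‖ := by
    have := Convex.norm_image_sub_le_of_norm_hasFDerivWithin_le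
      (f := ℓ) (f' := fun z => Dℓ z) (C := Gℓ) (s := Set.univ)
      (fun z _ => (hℓ z).hasFDerivWithinAt) (fun z _ => hGℓ z)
      convex_univ (Set.mem_univ x') (Set.mem_univ x)
    exact this
  -- triangle inequality for the x-gradient piece
  have h5 : ‖(g' x - ContinuousLinearMap.adjoint (Dℓ x) y) -
      (g' x' - ContinuousLinearMap.adjoint (Dℓ x') y')‖
      ≤ Lg * ‖x - x'‖ + Lℓ * ‖x - x'‖ * Dy + Gℓ * ‖y - y'‖ := by
    have he : (g' x - ContinuousLinearMap.adjoint (Dℓ x) y) -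
        (g' x' - ContinuousLinearMap.adjoint (Dℓ x') y')
        = (g' x - g' x')
          - (ContinuousLinearMap.adjoint (Dℓ x) y - ContinuousLinearMap.adjoint (Dℓ x') y)
          - (ContinuousLinearMap.adjoint (Dℓ x') y - ContinuousLinearMap.adjoint (Dℓ x') y') := by
      abel
    rw [he]
    calc ‖_ - _ - _‖ ≤ ‖(g' x - g' x')
          - (ContinuousLinearMap.adjoint (Dℓ x) y - ContinuousLinearMap.adjoint (Dℓ x') y)‖
          + ‖ContinuousLinearMap.adjoint (Dℓ x') y - ContinuousLinearMap.adjoint (Dℓ x') y'‖ :=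
        norm_sub_le _ _
      _ ≤ (‖g' x - g' x'‖ + ‖ContinuousLinearMap.adjoint (Dℓ x) y
            - ContinuousLinearMap.adjoint (Dℓ x') y‖)
          + ‖ContinuousLinearMap.adjoint (Dℓ x') y - ContinuousLinearMap.adjoint (Dℓ x') y'‖ := by
        gcongr; exact norm_sub_le _ _
      _ ≤ Lg * ‖x - x'‖ + Lℓ * ‖x - x'‖ * Dy + Gℓ * ‖y - y'‖ := by
        linarith
  have h6 : ‖(-ℓ x) - (-ℓ x')‖ = ‖ℓ x - ℓ x'‖ := by
    rw [← norm_neg]; congr 1; abel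
  have hmax : (Real.sqrt (max (2 * Lg ^ 2 + 4 * Lℓ ^ 2 * Dy ^ 2 + Gℓ ^ 2) (4 * Gℓ ^ 2))) ^ 2
      = max (2 * Lg ^ 2 + 4 * Lℓ ^ 2 * Dy ^ 2 + Gℓ ^ 2) (4 * Gℓ ^ 2) :=
    Real.sq_sqrt (le_max_of_le_right (by positivity))
  rw [hmax, h6]
  set M := max (2 * Lg ^ 2 + 4 * Lℓ ^ 2 * Dy ^ 2 + Gℓ ^ 2) (4 * Gℓ ^ 2) with hM
  have hm1 : 2 * Lg ^ 2 + 4 * Lℓ ^ 2 * Dy ^ 2 + Gℓ ^ 2 ≤ M := le_max_left _ _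
  have hm2 : 4 * Gℓ ^ 2 ≤ M := le_max_right _ _
  set a := ‖(g' x - ContinuousLinearMap.adjoint (Dℓ x) y) -
      (g' x' - ContinuousLinearMap.adjoint (Dℓ x') y')‖ with ha
  set b := ‖ℓ x - ℓ x'‖ with hb
  set A := ‖x - x'‖
  set B := ‖y - y'‖
  have hn1 : (0:ℝ) ≤ a := norm_nonneg _
  have hn2 : (0:ℝ) ≤ b := norm_nonneg _
  clear_value a b A B M
  clear ha hb hM hgL hGℓ hLℓ hY h1 h2 h3 h6 hmax hg hℓ hy hy'
  have key : a ^ 2 ≤ 2 * (Lg * A) ^ 2 + 4 * (Lℓ * A * Dy) ^ 2 + 4 * (Gℓ * B) ^ 2 := by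
    have h7 : a ^ 2 ≤ (Lg * A + Lℓ * A * Dy + Gℓ * B) ^ 2 := by
      have := mul_le_mul h5 h5 hn1 (by linarith)
      nlinarith
    nlinarith [sq_nonneg (Lg * A - Lℓ * A * Dy - Gℓ * B), sq_nonneg (Lℓ * A * Dy - Gℓ * B)]
  have key2 : b ^ 2 ≤ (Gℓ * A) ^ 2 := by nlinarith
  have hMA : (2 * Lg ^ 2 + 4 * Lℓ ^ 2 * Dy ^ 2 + Gℓ ^ 2) * A ^ 2 ≤ M * A ^ 2 :=
    mul_le_mul_of_nonneg_right hm1 (by positivity)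
  have hMB : (4 * Gℓ ^ 2) * B ^ 2 ≤ M * B ^ 2 :=
    mul_le_mul_of_nonneg_right hm2 (by positivity)
  nlinarith [key, key2, hMA, hMB]
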